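/- Let H be a real Hilbert space, let a : H × H → ℝ be a symmetric bilinear form, let G : H → H satisfy a(G w, v) = ⟨w, v⟩ for all w, v ∈ H, let θ : H → H be a bounded self-adjoint linear operator, and let u ∈ H with ‖u‖ = 1 satisfy G u = λ⁻¹ u for some λ ≠ 0. If v ∈ H satisfies ⟨v, u⟩ = 0 and G(θ v) − ⟨G(θ v), u⟩ u = (μ/λ) v for some μ ∈ ℝ, then (μ/λ)·a(v, w) = ⟨θ v, w − ⟨u, w⟩u⟩ for all w ∈ H. -/

import Mathlib

theorem stmt8 {H : Type*} [NormedAddCommGroup H] [InnerProductSpace ℝ H]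
    (a : H →ₗ[ℝ] H →ₗ[ℝ] ℝ) (hsymm : ∀ v w : H, a v w = a w v)
    (G : H →ₗ[ℝ] H) (hG : ∀ w v : H, a (G w) v = inner ℝ w v)
    (θ : H →L[ℝ] H) (hθ : ∀ v w : H, (inner ℝ (θ v) w : ℝ) = inner ℝ v (θ w))
    (u : H) (hu : ‖u‖ = 1) (lam : ℝ) (hlam : lam ≠ 0)
    (hGu : G u = lam⁻¹ • u)
    (v : H) (hv : (inner ℝ v u : ℝ) = 0) (mu : ℝ)
    (heig : G (θ v) - (inner ℝ (G (θ v)) u : ℝ) • u = (mu / lam) • v) :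
    ∀ w : H, (mu / lam) * a v w = inner ℝ (θ v) (w - (inner ℝ u w : ℝ) • u) := by
  intro w
  set c : ℝ := inner ℝ (G (θ v)) u with hc
  have hulam : (lam : ℝ) • G u = u := by
    rw [hGu, smul_smul, mul_inv_cancel₀ hlam, one_smul]
  have hau : a u w = lam * inner ℝ u w := by
    conv_lhs => rw [← hulam]
    simp [hG]
  have hcval : c = lam⁻¹ * inner ℝ (θ v) u := by
    rw [hc, real_inner_comm, ← hG u, hGu, LinearMap.map_smul, LinearMap.smul_apply,
      smul_eq_mul, hsymm u, hG]
  have h1 : (mu / lam) * a v w = a (G (θ v)) w - c * a u w := by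
    have := congrArg (fun x => a x w) heig
    simpa [map_sub, LinearMap.map_smul, sub_eq_iff_eq_add] using this.symm
  rw [h1, hG, hau, hcval, inner_sub_right, real_inner_smul_right]
  field_simp
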